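/- For every k ∈ ℕ, the residual r_k(y^k) := ‖y^k − prox_g(y^k − ∇f(x^k) − 𝒢_k(y^k − x^k))‖ of the subproblem satisfies r_k(y^k) ≤ √2 · μ̲^{−1/2} (2 + ‖𝒢_k‖) √ε_k ‖d^k‖. -/

import Mathlib

open Set Filter
open scoped RealInnerProductSpace ENNReal

noncomputable section

attribute [local instance] Classical.propDecidable

variable {X : Type*} [NormedAddCommGroup X] [InnerProductSpace ℝ X] [FiniteDimensional ℝ X]

/-- `g` extended by `+∞` outside its domain `s`. -/
def extE (g : X → ℝ) (s : Set X) (x : X) : EReal := if x ∈ s then (g x : EReal) else ⊤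

/-- The objective `F = f + g`, extended-real valued. -/
def FE (f g : X → ℝ) (s : Set X) (x : X) : EReal := (f x : EReal) + extE g s x

/-- The strongly convex model `Θ_k` with base point `xk` and metric `G`, evaluated at `z`. -/
def Theta (f g : X → ℝ) (fgrad : X → X) (G : X →L[ℝ] X) (xk z : X) : ℝ :=
  f xk + ⟪fgrad xk, z - xk⟫ + (1/2) * ⟪z - xk, G (z - xk)⟫ + g z

/-- `p` is the proximal point `prox^D_{γ g}(u)`, i.e. the minimizer over `dom g` of
`z ↦ (1/(2γ)) ⟪ z - u, D (z - u) ⟫ + g z`. -/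
def IsProxPt (γ : ℝ) (D : X →L[ℝ] X) (g : X → ℝ) (s : Set X) (u p : X) : Prop :=
  p ∈ s ∧ ∀ z ∈ s,
    (1 / (2 * γ)) * ⟪p - u, D (p - u)⟫ + g p ≤
      (1 / (2 * γ)) * ⟪z - u, D (z - u)⟫ + g z

lemma vmipg_aux_nonneg {a c : ℝ} (hc : 0 ≤ c)
    (h : ∀ t : ℝ, 0 < t → t ≤ 1 → 0 ≤ a + t * c) : 0 ≤ a := by
  by_contra hlt
  push_neg at hlt
  rcases eq_or_lt_of_le hc with hc0 | hc0
  · have := h 1 one_pos le_rfl; nlinarith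
  · have ht0 : 0 < min 1 (-a / (2 * c)) :=
      lt_min one_pos (div_pos (by linarith) (by linarith))
    have h1 := h _ ht0 (min_le_left _ _)
    have h2 : min 1 (-a / (2 * c)) * c ≤ (-a / (2 * c)) * c :=
      mul_le_mul_of_nonneg_right (min_le_right _ _) hc
    have h3 : (-a / (2 * c)) * c = -a / 2 := by field_simp
    nlinarith

lemma vmipg_quad_expand (Q : X →L[ℝ] X) (hQ : ∀ u v : X, ⟪Q u, v⟫ = ⟪u, Q v⟫) (u v : X) :
    ⟪u + v, Q (u + v)⟫ = ⟪u, Q u⟫ + 2 * ⟪Q u, v⟫ + ⟪v, Q v⟫ := by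
  rw [map_add, inner_add_left, inner_add_right, inner_add_right, ← hQ u v,
    real_inner_comm v (Q u)]
  ring

lemma vmipg_vi {g : X → ℝ} {s : Set X} (hg : ConvexOn ℝ s g)
    (Q : X →L[ℝ] X) (hQ : ∀ u v : X, ⟪Q u, v⟫ = ⟪u, Q v⟫)
    (hQpos : ∀ u : X, 0 ≤ ⟪u, Q u⟫) (b w : X) (hw : w ∈ s)
    (hmin : ∀ z ∈ s, ⟪b, w⟫ + (1/2) * ⟪w, Q w⟫ + g w ≤ ⟪b, z⟫ + (1/2) * ⟪z, Q z⟫ + g z) :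
    ∀ z ∈ s, 0 ≤ ⟪b + Q w, z - w⟫ + g z - g w := by
  intro z hz
  have hc : 0 ≤ (1/2) * ⟪z - w, Q (z - w)⟫ := by have := hQpos (z - w); linarith
  refine vmipg_aux_nonneg hc ?_
  intro t ht0 ht1
  have hpt : (1 - t) • w + t • z = w + t • (z - w) := by
    rw [smul_sub, sub_smul, one_smul]; abel
  have hmem : w + t • (z - w) ∈ s := by
    rw [← hpt]; exact hg.1 hw hz (by linarith) ht0.le (by ring)
  have hgle : g (w + t • (z - w)) ≤ (1 - t) * g w + t * g z := by
    rw [← hpt]; exact hg.2 hw hz (by linarith) ht0.le (by ring)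
  have hmin' := hmin _ hmem
  have hib : ⟪b, w + t • (z - w)⟫ = ⟪b, w⟫ + t * ⟪b, z - w⟫ := by
    rw [inner_add_right, real_inner_smul_right]
  have hquad : ⟪w + t • (z - w), Q (w + t • (z - w))⟫
      = ⟪w, Q w⟫ + 2 * (t * ⟪Q w, z - w⟫) + t ^ 2 * ⟪z - w, Q (z - w)⟫ := by
    rw [vmipg_quad_expand Q hQ w (t • (z - w)), map_smul, real_inner_smul_right,
      real_inner_smul_left, real_inner_smul_right]
    ring
  rw [hib, hquad] at hmin'
  have hkey : 0 ≤ t * ((⟪b, z - w⟫ + ⟪Q w, z - w⟫ + g z - g w)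
      + t * ((1/2) * ⟪z - w, Q (z - w)⟫)) := by nlinarith [hmin', hgle]
  have hsplit : ⟪b + Q w, z - w⟫ = ⟪b, z - w⟫ + ⟪Q w, z - w⟫ := inner_add_left _ _ _
  by_contra hneg
  push_neg at hneg
  rw [hsplit] at hneg
  have := mul_neg_of_pos_of_neg ht0 (by linarith :
    (⟪b, z - w⟫ + ⟪Q w, z - w⟫ + g z - g w) + t * ((1/2) * ⟪z - w, Q (z - w)⟫) < 0)
  linarith

lemma vmipg_theta_eq (f g : X → ℝ) (fgrad : X → X) (Gk : X →L[ℝ] X)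
    (hs : ∀ u v : X, ⟪Gk u, v⟫ = ⟪u, Gk v⟫) (xk z : X) :
    Theta f g fgrad Gk xk z
      = (f xk - ⟪fgrad xk, xk⟫ + (1/2) * ⟪xk, Gk xk⟫)
        + (⟪fgrad xk - Gk xk, z⟫ + (1/2) * ⟪z, Gk z⟫ + g z) := by
  unfold Theta
  simp only [map_sub, inner_sub_left, inner_sub_right]
  rw [real_inner_comm (Gk xk) z, ← hs xk z]
  ring

set_option maxHeartbeats 1000000 in
/-- bound on the subproblem residual `r_k(y^k)`. -/
theorem residual_subproblem_bound
    (f g : X → ℝ) (domg O : Set X) (fgrad : X → X)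
    (hdom : domg.Nonempty) (hO : IsOpen O) (hclO : closure domg ⊆ O)
    (hgconv : ConvexOn ℝ domg g) (hgcont : ContinuousOn g domg)
    (hglsc : LowerSemicontinuous (extE g domg))
    (hflsc : LowerSemicontinuous f)
    (hfC2 : ContDiffOn ℝ 2 f O)
    (hfgrad : ∀ z ∈ O, HasGradientAt f (fgrad z) z)
    (hFlb : ∃ c : ℝ, ∀ z ∈ domg, c ≤ f z + g z)
    (μ σ β : ℝ) (hμ : 0 < μ) (hβ : 0 < β ∧ β < 1) (hσ : 0 < σ ∧ σ < (1/2) * min 1 μ)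
    (eps : ℕ → ℝ) (heps : ∀ k, 0 < eps k) (hepsbd : ∃ C : ℝ, ∀ k, eps k ≤ C)
    (kbar : ℕ) (hkbar : ∀ k, kbar ≤ k → eps k ≤ μ / 10)
    (x y xbar : ℕ → X) (G : ℕ → X →L[ℝ] X) (m : ℕ → ℕ)
    (hx0 : x 0 ∈ domg)
    (hGsa : ∀ k, ∀ u v : X, ⟪G k u, v⟫ = ⟪u, G k v⟫)
    (hGlb : ∀ k, ∀ u : X, μ * ‖u‖ ^ 2 ≤ ⟪u, G k u⟫)
    (hxbar : ∀ k, xbar k ∈ domg ∧ ∀ z ∈ domg,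
      Theta f g fgrad (G k) (x k) (xbar k) ≤ Theta f g fgrad (G k) (x k) z)
    (hy : ∀ k, y k ∈ domg ∧
      Theta f g fgrad (G k) (x k) (y k) < Theta f g fgrad (G k) (x k) (x k) ∧
      Theta f g fgrad (G k) (x k) (y k) - Theta f g fgrad (G k) (x k) (xbar k)
        ≤ eps k * ‖y k - x k‖ ^ 2)
    (hls : ∀ k,
      (FE f g domg (x k + β ^ (m k) • (y k - x k))
        ≤ ((f (x k) + g (x k) - σ * β ^ (m k) * ‖y k - x k‖ ^ 2 : ℝ) : EReal)) ∧
      ∀ j < m k, ¬ (FE f g domg (x k + β ^ j • (y k - x k))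
        ≤ ((f (x k) + g (x k) - σ * β ^ j * ‖y k - x k‖ ^ 2 : ℝ) : EReal)))
    (hupd : ∀ k,
      (FE f g domg (y k) < FE f g domg (x k + β ^ (m k) • (y k - x k)) ∧ x (k+1) = y k) ∨
      ((¬ FE f g domg (y k) < FE f g domg (x k + β ^ (m k) • (y k - x k))) ∧
        x (k+1) = x k + β ^ (m k) • (y k - x k)))
    (prox1 : X → X)
    (hprox1 : ∀ u : X, IsProxPt 1 (ContinuousLinearMap.id ℝ X) g domg u (prox1 u)) :
    ∀ k : ℕ,
      ‖y k - prox1 (y k - fgrad (x k) - G k (y k - x k))‖ ≤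
        Real.sqrt 2 * (Real.sqrt μ)⁻¹ * (2 + ‖G k‖) * Real.sqrt (eps k) * ‖y k - x k‖ := by
  intro k
  obtain ⟨hyk_mem, hylt, hyineq⟩ := hy k
  obtain ⟨hxb_mem, hxb_min⟩ := hxbar k
  set xk := x k with hxk_def
  set yk := y k with hyk_def
  set xb := xbar k with hxb_def
  set Gk := G k with hGk_def
  set a := fgrad (x k) with ha_def
  set u := yk - a - Gk (yk - xk) with hu_def
  obtain ⟨hp_mem, hp_min⟩ := hprox1 u
  set p := prox1 u with hp_def
  have hs : ∀ u v : X, ⟪Gk u, v⟫ = ⟪u, Gk v⟫ := hGsa k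
  have hQpos : ∀ v : X, 0 ≤ ⟪v, Gk v⟫ := fun v =>
    le_trans (by positivity) (hGlb k v)
  -- VI for xbar
  have hmin1 : ∀ z ∈ domg, ⟪a - Gk xk, xb⟫ + (1/2) * ⟪xb, Gk xb⟫ + g xb
      ≤ ⟪a - Gk xk, z⟫ + (1/2) * ⟪z, Gk z⟫ + g z := by
    intro z hz
    have h1 := hxb_min z hz
    rw [vmipg_theta_eq f g fgrad Gk hs xk xb, vmipg_theta_eq f g fgrad Gk hs xk z] at h1
    linarith
  have VI1 := vmipg_vi hgconv Gk hs hQpos (a - Gk xk) xb hxb_mem hmin1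
  -- VI for prox point
  have hid : ∀ u v : X, ⟪(ContinuousLinearMap.id ℝ X) u, v⟫ = ⟪u, (ContinuousLinearMap.id ℝ X) v⟫ := by
    intro u v; simp
  have hidpos : ∀ v : X, 0 ≤ ⟪v, (ContinuousLinearMap.id ℝ X) v⟫ := by
    intro v; simpa using real_inner_self_nonneg (x := v)
  have hmin2 : ∀ z ∈ domg, ⟪-u, p⟫ + (1/2) * ⟪p, (ContinuousLinearMap.id ℝ X) p⟫ + g p
      ≤ ⟪-u, z⟫ + (1/2) * ⟪z, (ContinuousLinearMap.id ℝ X) z⟫ + g z := by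
    intro z hz
    have h1 := hp_min z hz
    simp only [ContinuousLinearMap.id_apply, inner_sub_left, inner_sub_right,
      inner_neg_left] at h1 ⊢
    rw [real_inner_comm u p, real_inner_comm u z] at h1
    nlinarith [h1]
  have VI2 := vmipg_vi hgconv (ContinuousLinearMap.id ℝ X) hid hidpos (-u) p hp_mem hmin2
  -- strong convexity: Theta y - Theta xb ≥ (1/2)<y-xb, Gk(y-xb)>
  have hVIy := VI1 yk hyk_mem
  have heq : Theta f g fgrad Gk xk yk - Theta f g fgrad Gk xk xb
      = (⟪(a - Gk xk) + Gk xb, yk - xb⟫ + g yk - g xb)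
        + (1/2) * ⟪yk - xb, Gk (yk - xb)⟫ := by
    rw [vmipg_theta_eq f g fgrad Gk hs xk yk, vmipg_theta_eq f g fgrad Gk hs xk xb]
    simp only [map_sub, inner_sub_left, inner_sub_right, inner_add_left]
    rw [real_inner_comm (Gk xb) yk, ← hs xb yk, hs xb xb]
    ring
  have hstrong : (1/2) * ⟪yk - xb, Gk (yk - xb)⟫ ≤ eps k * ‖yk - xk‖ ^ 2 := by
    linarith [hyineq, hVIy, heq.symm.le, heq.le]
  have hnorm2 : μ * ‖yk - xb‖ ^ 2 ≤ 2 * eps k * ‖yk - xk‖ ^ 2 := by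
    have := hGlb k (yk - xb)
    linarith
  -- combine the two VIs
  have hVIp := VI1 p hp_mem
  have hVIxb := VI2 xb hxb_mem
  simp only [ContinuousLinearMap.id_apply] at hVIxb
  have hvec : ((a - Gk xk) + Gk xb) - (-u + p) = Gk (xb - yk) + (yk - p) := by
    rw [hu_def]
    simp only [map_sub]
    abel
  have hflip : ⟪(-u + p : X), xb - p⟫ = -⟪(-u + p : X), p - xb⟫ := by
    rw [show xb - p = -(p - xb) by abel, inner_neg_right]
  have hcomb2 : 0 ≤ ⟪Gk (xb - yk) + (yk - p), p - xb⟫ := by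
    rw [← hvec, inner_sub_left]
    linarith [hVIp, hVIxb, hflip]
  have hpxb : p - xb = -((yk - p) + (xb - yk)) := by abel
  have hexp : ⟪Gk (xb - yk) + (yk - p), p - xb⟫
      = -(⟪Gk (xb - yk), yk - p⟫ + ⟪xb - yk, Gk (xb - yk)⟫
          + ⟪(yk - p : X), yk - p⟫ + ⟪(yk - p : X), xb - yk⟫) := by
    rw [hpxb, inner_neg_right, inner_add_left, inner_add_right, inner_add_right,
      hs (xb - yk) (xb - yk)]
    ring
  have hee : ⟪(yk - p : X), yk - p⟫ = ‖yk - p‖ ^ 2 := real_inner_self_eq_norm_sq _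
  have hGh : |⟪Gk (xb - yk), yk - p⟫| ≤ ‖Gk‖ * ‖xb - yk‖ * ‖yk - p‖ := by
    calc |⟪Gk (xb - yk), yk - p⟫| ≤ ‖Gk (xb - yk)‖ * ‖yk - p‖ := abs_real_inner_le_norm _ _
      _ ≤ ‖Gk‖ * ‖xb - yk‖ * ‖yk - p‖ :=
        mul_le_mul_of_nonneg_right (Gk.le_opNorm _) (norm_nonneg _)
  have heh : |⟪(yk - p : X), xb - yk⟫| ≤ ‖yk - p‖ * ‖xb - yk‖ := abs_real_inner_le_norm _ _
  have hGhh : 0 ≤ ⟪xb - yk, Gk (xb - yk)⟫ := hQpos _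
  have hfirm : ‖yk - p‖ ^ 2 ≤ (1 + ‖Gk‖) * ‖xb - yk‖ * ‖yk - p‖ := by
    have h1 := abs_le.mp hGh
    have h2 := abs_le.mp heh
    nlinarith [hcomb2, hexp.le, hexp.symm.le]
  have hne : ‖yk - p‖ ≤ (1 + ‖Gk‖) * ‖xb - yk‖ := by
    rcases eq_or_lt_of_le (norm_nonneg (yk - p)) with h0 | h0
    · rw [← h0]
      have : (0:ℝ) ≤ ‖Gk‖ := norm_nonneg _
      positivity
    · nlinarith [hfirm, h0]
  -- finish
  have hR2 : (Real.sqrt 2 * (Real.sqrt μ)⁻¹ * Real.sqrt (eps k)) ^ 2 = 2 * eps k / μ := by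
    rw [mul_pow, mul_pow, inv_pow, Real.sq_sqrt (by norm_num : (0:ℝ) ≤ 2),
      Real.sq_sqrt (heps k).le, Real.sq_sqrt hμ.le]
    ring
  have hR0 : 0 ≤ Real.sqrt 2 * (Real.sqrt μ)⁻¹ * Real.sqrt (eps k) := by positivity
  have hh : ‖xb - yk‖ ≤ (Real.sqrt 2 * (Real.sqrt μ)⁻¹ * Real.sqrt (eps k)) * ‖yk - xk‖ := by
    have h2 : ‖xb - yk‖ ^ 2
        ≤ ((Real.sqrt 2 * (Real.sqrt μ)⁻¹ * Real.sqrt (eps k)) * ‖yk - xk‖) ^ 2 := by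
      rw [mul_pow, hR2, norm_sub_rev xb yk, div_mul_eq_mul_div, le_div_iff₀ hμ]
      nlinarith [hnorm2]
    calc ‖xb - yk‖ = Real.sqrt (‖xb - yk‖ ^ 2) := (Real.sqrt_sq (norm_nonneg _)).symm
      _ ≤ Real.sqrt (((Real.sqrt 2 * (Real.sqrt μ)⁻¹ * Real.sqrt (eps k)) * ‖yk - xk‖) ^ 2) :=
        Real.sqrt_le_sqrt h2
      _ = (Real.sqrt 2 * (Real.sqrt μ)⁻¹ * Real.sqrt (eps k)) * ‖yk - xk‖ :=
        Real.sqrt_sq (by positivity)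
  have hGk0 : (0:ℝ) ≤ ‖Gk‖ := norm_nonneg _
  calc ‖yk - p‖ ≤ (1 + ‖Gk‖) * ‖xb - yk‖ := hne
    _ ≤ (1 + ‖Gk‖) * ((Real.sqrt 2 * (Real.sqrt μ)⁻¹ * Real.sqrt (eps k)) * ‖yk - xk‖) :=
      mul_le_mul_of_nonneg_left hh (by linarith)
    _ ≤ (2 + ‖Gk‖) * ((Real.sqrt 2 * (Real.sqrt μ)⁻¹ * Real.sqrt (eps k)) * ‖yk - xk‖) := by
      have h0 : 0 ≤ (Real.sqrt 2 * (Real.sqrt μ)⁻¹ * Real.sqrt (eps k)) * ‖yk - xk‖ := by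
        positivity
      nlinarith
    _ = Real.sqrt 2 * (Real.sqrt μ)⁻¹ * (2 + ‖Gk‖) * Real.sqrt (eps k) * ‖yk - xk‖ := by
      ring
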